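/- Diffusion coefficient asymptotics for the rescaled Moran line counting process. Assume strong or moderately strong selection. For every compact set K ⊆ ℝ, writing x̂ := μ_N + x σ_N, one has lim_{N→∞} sup_{x ∈ E_N ∩ K} | (1/(2 σ_N²)) ( x̂ (1 − x̂/N) + (γ/(2 s_N N)) x̂ (x̂ − 1) ) − 1 | = 0; that is, the normalised sum of the up-rate and the down-rate of the time-rescaled, centred and normalised line counting process converges to the Ornstein–Uhlenbeck diffusion coefficient σ²/2 = 1, uniformly on compact sets intersected with the lattice E_N. -/

import Mathlib

open Filter

set_option maxHeartbeats 1000000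

private lemma abs_add_four (a b c d : ℝ) : |a + b + c + d| ≤ |a| + |b| + |c| + |d| :=
  (abs_add_le _ _).trans (add_le_add_left ((abs_add_le _ _).trans
    (add_le_add_left (abs_add_le _ _) _)) _)

private lemma sqrt_tendsto_atTop' : Tendsto Real.sqrt atTop atTop :=
  tendsto_atTop_atTop_of_monotone (fun _ _ h => Real.sqrt_le_sqrt h)
    (fun b => ⟨b ^ 2, by rw [Real.sqrt_sq_eq_abs]; exact le_abs_self b⟩)

/-- Diffusion coefficient asymptotics for the rescaled Moran line counting process:
the normalised sum of the up-rate and the down-rate converges to the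
Ornstein–Uhlenbeck diffusion coefficient `σ²/2 = 1`, uniformly on compact sets
intersected with `E_N`. -/
theorem moran_diffusion_asymptotics
    (γ : ℝ) (hγ : 0 < γ) (s : ℕ → ℝ) (hs : ∀ N, 0 < s N)
    (hconv : ∃ l : ℝ, 0 ≤ l ∧ Tendsto s atTop (nhds l))
    (hNs : Tendsto (fun N : ℕ => (N : ℝ) * s N) atTop atTop)
    (μ σ : ℕ → ℝ)
    (hμ : ∀ N : ℕ, μ N = 2 * s N * N / (2 * s N + γ))
    (hσ : ∀ N : ℕ, σ N =
      Real.sqrt ((2 * s N / (2 * s N + γ)) * (1 - 2 * s N / (2 * s N + γ)) * N))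
    (E : ℕ → Set ℝ)
    (hE : ∀ N : ℕ, E N = {x : ℝ | ∃ k : ℕ, 1 ≤ k ∧ k ≤ N ∧ x = ((k : ℝ) - μ N) / σ N})
    (K : Set ℝ) (hK : IsCompact K) :
    Tendsto (fun N : ℕ =>
      sSup ((fun x : ℝ =>
        |(1 / (2 * (σ N) ^ 2)) * ((μ N + x * σ N) * (1 - (μ N + x * σ N) / N)
            + (γ / (2 * s N * N)) * (μ N + x * σ N) * ((μ N + x * σ N) - 1))
          - 1|) '' (E N ∩ K)))
      atTop (nhds 0) := by
  obtain ⟨l, hl0, hsl⟩ := hconv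
  -- a uniform bound `M` on `K`
  obtain ⟨r, hr⟩ := hK.isBounded.subset_closedBall 0
  set M : ℝ := max r 0 with hMdef
  have hM0 : 0 ≤ M := le_max_right r 0
  have hxK : ∀ x ∈ K, |x| ≤ M := by
    intro x hx
    have := hr hx
    rw [Metric.mem_closedBall, Real.dist_eq, sub_zero] at this
    exact this.trans (le_max_left r 0)
  -- the dominating sequence
  set B : ℕ → ℝ := fun N =>
    (γ / (2 * s N + γ)) / (2 * (σ N) ^ 2)
    + M * (1 + γ / (2 * s N * N)) / (2 * σ N)
    + (γ + 2 * s N) / (2 * s N * N) * M ^ 2 / 2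
    + M / σ N with hBdef
  -- basic positivity for each `N`
  have hsd : ∀ N : ℕ, 0 < 2 * s N + γ := fun N => by have := hs N; linarith
  -- limit facts
  have h2sN : Tendsto (fun N : ℕ => 2 * s N * N) atTop atTop := by
    have h := hNs.atTop_mul_const (two_pos (α := ℝ))
    exact h.congr fun N => by ring
  have hdent : Tendsto (fun N : ℕ => 2 * s N + γ) atTop (nhds (2 * l + γ)) := by
    simpa using (hsl.const_mul 2).add (tendsto_const_nhds (x := γ))
  have hdenpos : 0 < 2 * l + γ := by linarith
  have hσt : Tendsto σ atTop atTop := by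
    have hg : Tendsto (fun N : ℕ => γ / (2 * s N + γ) ^ 2) atTop
        (nhds (γ / (2 * l + γ) ^ 2)) :=
      tendsto_const_nhds.div (hdent.pow 2) (by positivity)
    have hargs : Tendsto
        (fun N : ℕ => (2 * s N / (2 * s N + γ)) * (1 - 2 * s N / (2 * s N + γ)) * (N:ℝ))
        atTop atTop := by
      have := hg.pos_mul_atTop (by positivity) h2sN
      refine this.congr fun N => ?_
      have hd := hsd N
      field_simp
      ring
    have := sqrt_tendsto_atTop'.comp hargs
    exact this.congr fun N => (hσ N).symm
  have hσ2t : Tendsto (fun N : ℕ => (σ N) ^ 2) atTop atTop := by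
    have := hσt.atTop_mul_atTop₀ hσt
    exact this.congr fun N => by ring
  -- each term of `B` tends to `0`
  have ht1 : Tendsto (fun N : ℕ => (γ / (2 * s N + γ)) / (2 * (σ N) ^ 2)) atTop (nhds 0) :=
    (tendsto_const_nhds.div hdent hdenpos.ne').div_atTop
      (hσ2t.const_mul_atTop two_pos)
  have hgsN : Tendsto (fun N : ℕ => γ / (2 * s N * N)) atTop (nhds 0) :=
    tendsto_const_nhds.div_atTop h2sN
  have ht2 : Tendsto (fun N : ℕ => M * (1 + γ / (2 * s N * N)) / (2 * σ N)) atTop (nhds 0) :=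
    (((tendsto_const_nhds (x := (1:ℝ))).add hgsN).const_mul M).div_atTop
      (hσt.const_mul_atTop two_pos)
  have ht3 : Tendsto (fun N : ℕ => (γ + 2 * s N) / (2 * s N * N) * M ^ 2 / 2) atTop (nhds 0) := by
    have h := (((tendsto_const_nhds (x := γ)).add (hsl.const_mul 2)).div_atTop h2sN).mul_const
      (M ^ 2)
    simpa using h.div_const 2
  have ht4 : Tendsto (fun N : ℕ => M / σ N) atTop (nhds 0) :=
    tendsto_const_nhds.div_atTop hσt
  have hBt : Tendsto B atTop (nhds 0) := by
    have := ((ht1.add ht2).add ht3).add ht4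
    simpa using this
  -- squeeze
  refine tendsto_of_tendsto_of_tendsto_of_le_of_le' (tendsto_const_nhds (x := (0:ℝ))) hBt
    (Eventually.of_forall fun N => Real.sSup_nonneg ?_) ?_
  · rintro y ⟨x, -, rfl⟩
    exact abs_nonneg _
  filter_upwards [eventually_ge_atTop 1] with N hN1
  have hsn : 0 < s N := hs N
  have hNpos : (0:ℝ) < N := by exact_mod_cast Nat.pos_of_ne_zero (by omega)
  have hd : 0 < 2 * s N + γ := hsd N
  have hfrac1 : 0 < 2 * s N / (2 * s N + γ) := by positivity
  have hfrac2 : 2 * s N / (2 * s N + γ) < 1 := by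
    rw [div_lt_one hd]; linarith
  have harg : 0 < (2 * s N / (2 * s N + γ)) * (1 - 2 * s N / (2 * s N + γ)) * N := by
    have : 0 < 1 - 2 * s N / (2 * s N + γ) := by linarith
    positivity
  have hσpos : 0 < σ N := by rw [hσ]; exact Real.sqrt_pos.2 harg
  have hσ2 : (σ N) ^ 2 * (2 * s N + γ) ^ 2 = 2 * s N * γ * N := by
    rw [hσ, Real.sq_sqrt harg.le]
    field_simp
    ring
  have hBnonneg : 0 ≤ B N := by
    rw [hBdef]
    have := hγ.le
    positivity
  refine Real.sSup_le ?_ hBnonneg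
  rintro y ⟨x, ⟨-, hxK'⟩, rfl⟩
  have hxM : |x| ≤ M := hxK x hxK'
  -- the key identity
  have key : (1 / (2 * (σ N) ^ 2)) * ((μ N + x * σ N) * (1 - (μ N + x * σ N) / N)
        + (γ / (2 * s N * N)) * (μ N + x * σ N) * ((μ N + x * σ N) - 1)) - 1
      = -((γ / (2 * s N + γ)) / (2 * (σ N) ^ 2))
        + x * (1 - γ / (2 * s N * N)) / (2 * σ N)
        + (γ - 2 * s N) / (2 * s N * N) * x ^ 2 / 2
        + (γ - 2 * s N) / (2 * s N + γ) * x / σ N := by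
    have hD : (μ N + x * σ N) * (1 - (μ N + x * σ N) / N)
          + (γ / (2 * s N * N)) * (μ N + x * σ N) * ((μ N + x * σ N) - 1) - 2 * (σ N) ^ 2
        = -(γ / (2 * s N + γ)) + x * σ N * (1 - γ / (2 * s N * N))
          + (γ - 2 * s N) / (2 * s N * N) * x ^ 2 * (σ N) ^ 2
          + (γ - 2 * s N) / (2 * s N + γ) * 2 * x * σ N := by
      rw [hμ]
      field_simp
      ring_nf
      linear_combination (-4 * s N * (N:ℝ)) * hσ2
    have step1 : (1 / (2 * (σ N) ^ 2)) * ((μ N + x * σ N) * (1 - (μ N + x * σ N) / N)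
          + (γ / (2 * s N * N)) * (μ N + x * σ N) * ((μ N + x * σ N) - 1)) - 1
        = ((μ N + x * σ N) * (1 - (μ N + x * σ N) / N)
          + (γ / (2 * s N * N)) * (μ N + x * σ N) * ((μ N + x * σ N) - 1)
          - 2 * (σ N) ^ 2) / (2 * (σ N) ^ 2) := by
      field_simp
    rw [step1, hD]
    field_simp
  -- bound the four terms
  have h2sNN : (0:ℝ) < 2 * s N * N := mul_pos (by linarith) hNpos
  have h1c : |1 - γ / (2 * s N * N)| ≤ 1 + γ / (2 * s N * N) := by
    have h0 : 0 ≤ γ / (2 * s N * N) := le_of_lt (div_pos hγ h2sNN)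
    calc |1 - γ / (2 * s N * N)| ≤ |(1:ℝ)| + |γ / (2 * s N * N)| := abs_sub _ _
      _ = 1 + γ / (2 * s N * N) := by rw [abs_one, abs_of_nonneg h0]
  have hγ2s : |γ - 2 * s N| ≤ γ + 2 * s N := by
    calc |γ - 2 * s N| ≤ |γ| + |2 * s N| := abs_sub _ _
      _ = γ + 2 * s N := by rw [abs_of_pos hγ, abs_of_pos (by linarith : (0:ℝ) < 2 * s N)]
  have hx2 : x ^ 2 ≤ M ^ 2 := sq_le_sq' (neg_le_of_abs_le hxM) (le_of_abs_le hxM)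
  have hb1 : |(-((γ / (2 * s N + γ)) / (2 * (σ N) ^ 2)))|
      ≤ (γ / (2 * s N + γ)) / (2 * (σ N) ^ 2) := by
    rw [abs_neg, abs_of_nonneg (le_of_lt (div_pos (div_pos hγ hd)
      (by nlinarith [sq_nonneg (σ N)] : (0:ℝ) < 2 * (σ N) ^ 2)))]
  have hb2 : |x * (1 - γ / (2 * s N * N)) / (2 * σ N)|
      ≤ M * (1 + γ / (2 * s N * N)) / (2 * σ N) := by
    have h2σ : (0:ℝ) < 2 * σ N := by linarith
    rw [abs_div, abs_mul, abs_of_pos h2σ]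
    exact div_le_div_of_nonneg_right
      (mul_le_mul hxM h1c (abs_nonneg _) hM0) h2σ.le
  have hb3 : |(γ - 2 * s N) / (2 * s N * N) * x ^ 2 / 2|
      ≤ (γ + 2 * s N) / (2 * s N * N) * M ^ 2 / 2 := by
    rw [abs_div, abs_mul, abs_div, abs_of_pos h2sNN, abs_of_nonneg (sq_nonneg x), abs_two]
    refine div_le_div_of_nonneg_right ?_ two_pos.le
    exact mul_le_mul (div_le_div_of_nonneg_right hγ2s h2sNN.le) hx2 (sq_nonneg x)
      (le_of_lt (div_pos (by linarith) h2sNN))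
  have hb4 : |(γ - 2 * s N) / (2 * s N + γ) * x / σ N| ≤ M / σ N := by
    rw [abs_div, abs_mul, abs_div, abs_of_pos hd, abs_of_pos hσpos]
    refine div_le_div_of_nonneg_right ?_ hσpos.le
    have hratio : |γ - 2 * s N| / (2 * s N + γ) ≤ 1 := by
      rw [div_le_one hd]
      calc |γ - 2 * s N| ≤ γ + 2 * s N := hγ2s
        _ = 2 * s N + γ := by ring
    calc |γ - 2 * s N| / (2 * s N + γ) * |x| ≤ 1 * M :=
          mul_le_mul hratio hxM (abs_nonneg _) zero_le_one
      _ = M := one_mul M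
  show |1 / (2 * σ N ^ 2) * ((μ N + x * σ N) * (1 - (μ N + x * σ N) / (N:ℝ))
      + γ / (2 * s N * (N:ℝ)) * (μ N + x * σ N) * (μ N + x * σ N - 1)) - 1| ≤ B N
  rw [key]
  have hBN : B N = γ / (2 * s N + γ) / (2 * σ N ^ 2)
      + M * (1 + γ / (2 * s N * N)) / (2 * σ N)
      + (γ + 2 * s N) / (2 * s N * N) * M ^ 2 / 2 + M / σ N := rfl
  rw [hBN]
  exact le_trans (abs_add_four _ _ _ _)
    (add_le_add (add_le_add (add_le_add hb1 hb2) hb3) hb4)
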